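/- Let 0 < q < 1 and let A be the universal *-algebra generated by F and a positive invertible self-adjoint K with relations KF = q^{-2}FK, K F* = q² F* K, and F*F − q² F F* = (1 + K^{-2})/(q − q^{-1}). For each r ∈ ℝ define on the pre-Hilbert space with orthonormal basis (e_n)_{n∈ℕ} the operators K e_n = q^{-r+2n} e_n and q^{1/2}(q^{-1} − q) F e_n = q^{-n} ((1 − q^{2n})(1 + q^{2r+2−2n}))^{1/2} e_{n−1} (with F e_0 = 0). Then these operators satisfy the defining relations of A and F* acts as the adjoint, so they define a *-representation π_r of A. -/

import Mathlib

noncomputable section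

open Finsupp

variable (q r : ℝ)

/-- The diagonal operator `K e_n = q^{-r+2n} e_n` on `ℂ[ℕ]`. -/
def Kop : (ℕ →₀ ℂ) →ₗ[ℂ] (ℕ →₀ ℂ) :=
  Finsupp.lsum ℂ fun n => LinearMap.toSpanSingleton ℂ _
    (((q ^ (-r + 2 * (n : ℝ)) : ℝ) : ℂ) • Finsupp.single n 1)

/-- The inverse diagonal operator `K⁻¹ e_n = q^{r-2n} e_n`. -/
def Kinvop : (ℕ →₀ ℂ) →ₗ[ℂ] (ℕ →₀ ℂ) :=
  Finsupp.lsum ℂ fun n => LinearMap.toSpanSingleton ℂ _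
    (((q ^ (r - 2 * (n : ℝ)) : ℝ) : ℂ) • Finsupp.single n 1)

/-- The coefficient `c_n` with `q^{1/2}(q⁻¹−q) F e_n = q^{-n}((1−q^{2n})(1+q^{2r+2−2n}))^{1/2} e_{n−1}`. -/
def Fcoef (n : ℕ) : ℝ :=
  q ^ (-(n : ℝ)) * Real.sqrt ((1 - q ^ (2 * (n : ℝ))) * (1 + q ^ (2 * r + 2 - 2 * (n : ℝ)))) /
    (q ^ ((1 : ℝ) / 2) * (q⁻¹ - q))

/-- The lowering operator `F e_n = c_n e_{n-1}` (note `c_0 = 0`). -/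
def Fop : (ℕ →₀ ℂ) →ₗ[ℂ] (ℕ →₀ ℂ) :=
  Finsupp.lsum ℂ fun n => LinearMap.toSpanSingleton ℂ _
    (((Fcoef q r n : ℝ) : ℂ) • Finsupp.single (n - 1) 1)

/-- The raising operator `F* e_n = c_{n+1} e_{n+1}` (the formal adjoint of `F`). -/
def Fstarop : (ℕ →₀ ℂ) →ₗ[ℂ] (ℕ →₀ ℂ) :=
  Finsupp.lsum ℂ fun n => LinearMap.toSpanSingleton ℂ _
    (((Fcoef q r (n + 1) : ℝ) : ℂ) • Finsupp.single (n + 1) 1)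

/-- The inner product `⟨v, w⟩ = ∑ conj(v_n) w_n` on `ℂ[ℕ]`. -/
def innerF (v w : ℕ →₀ ℂ) : ℂ := v.sum fun n a => (starRingEnd ℂ a) * w n

/-! ### Auxiliary lemmas -/

lemma aux_key (q s b : ℝ) (hq0 : 0 < q) (hq1 : q < 1) (hb : 0 < b) :
    (1/b * (1-b) * (1 + s*q^2/b)) / (q*(q⁻¹-q)^2)
      - q^2 * ((1/(b*q^2)) * (1-b*q^2) * (1 + s*q^2/(b*q^2)) / (q*(q⁻¹-q)^2))
      = (q - q⁻¹)⁻¹ * (1 + s/b^2) := by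
  have hq : q ≠ 0 := hq0.ne'
  have h1 : (1:ℝ) - q^2 ≠ 0 := by nlinarith
  have h1' : q^2 - 1 ≠ 0 := by intro h; apply h1; linarith
  have hbne : b ≠ 0 := hb.ne'
  have e1 : q⁻¹ - q = (1-q^2)/q := by field_simp
  have e2 : q - q⁻¹ = (q^2-1)/q := by field_simp
  rw [e1, e2]
  field_simp
  ring

lemma aux_Fcoef_zero : Fcoef q r 0 = 0 := by
  simp [Fcoef]

lemma aux_Fcoef_sq (hq0 : 0 < q) (hq1 : q < 1) (n : ℕ) :
    Fcoef q r n * Fcoef q r n =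
      (1/((q^2)^n) * (1-(q^2)^n) * (1 + q^(2*r) * q^2 /((q^2)^n))) / (q*(q⁻¹-q)^2) := by
  have hb : q ^ (2*(n:ℝ)) = (q^2)^n := by
    rw [show (2*(n:ℝ)) = ((2*n : ℕ) : ℝ) by push_cast; ring, Real.rpow_natCast, pow_mul]
  have hneg : q ^ (-(n:ℝ)) * q ^ (-(n:ℝ)) = 1/((q^2)^n) := by
    rw [← Real.rpow_add hq0, show (-(n:ℝ) + -(n:ℝ)) = -((2*n:ℕ):ℝ) by push_cast; ring,
      Real.rpow_neg hq0.le, Real.rpow_natCast, pow_mul, one_div]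
  have hc : q ^ (2*r+2-2*(n:ℝ)) = q^(2*r) * q^2 / ((q^2)^n) := by
    rw [show 2*r+2-2*(n:ℝ) = (2*r) + ((2:ℕ):ℝ) + (-((2*n:ℕ):ℝ)) by push_cast; ring,
      Real.rpow_add hq0, Real.rpow_add hq0, Real.rpow_neg hq0.le, Real.rpow_natCast,
      Real.rpow_natCast, pow_mul]
    ring
  have hhalf : q^((1:ℝ)/2) * q^((1:ℝ)/2) = q := by
    rw [← Real.rpow_add hq0]; norm_num
  have hnn : 0 ≤ (1 - q ^ (2 * (n : ℝ))) * (1 + q ^ (2 * r + 2 - 2 * (n : ℝ))) := by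
    apply mul_nonneg
    · rw [hb]; have : (q^2)^n ≤ 1 := pow_le_one₀ (by positivity) (by nlinarith)
      linarith
    · have := Real.rpow_pos_of_pos hq0 (2 * r + 2 - 2 * (n : ℝ)); linarith
  unfold Fcoef
  rw [div_mul_div_comm, mul_mul_mul_comm (q ^ (-(n:ℝ))) _ (q ^ (-(n:ℝ))),
    mul_mul_mul_comm (q ^ ((1:ℝ)/2)) _ (q ^ ((1:ℝ)/2)), Real.mul_self_sqrt hnn,
    hneg, hhalf, hb, hc]
  ring

lemma aux_rel3_scalar (hq0 : 0 < q) (hq1 : q < 1) (n : ℕ) :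
    Fcoef q r n * Fcoef q r n - q^2 * (Fcoef q r (n+1) * Fcoef q r (n+1))
      = (q - q⁻¹)⁻¹ * (1 + q^(r - 2*(n:ℝ)) * q^(r - 2*(n:ℝ))) := by
  have hK : q^(r-2*(n:ℝ)) * q^(r-2*(n:ℝ)) = q^(2*r) / ((q^2)^n)^2 := by
    rw [← Real.rpow_add hq0,
      show (r-2*(n:ℝ)) + (r-2*(n:ℝ)) = (2*r) + (-((4*n:ℕ):ℝ)) by push_cast; ring,
      Real.rpow_add hq0, Real.rpow_neg hq0.le, Real.rpow_natCast,
      show (4*n) = (2*n)*2 by ring, pow_mul, pow_mul]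
    ring
  rw [aux_Fcoef_sq q r hq0 hq1, aux_Fcoef_sq q r hq0 hq1, hK, pow_succ]
  linear_combination aux_key q (q^(2*r)) ((q^2)^n) hq0 hq1 (by positivity)

lemma aux_Kop_single (n : ℕ) (b : ℂ) :
    Kop q r (Finsupp.single n b) = (((q ^ (-r + 2 * (n : ℝ)) : ℝ) : ℂ) * b) • Finsupp.single n 1 := by
  simp [Kop, mul_comm]

lemma aux_Kinvop_single (n : ℕ) (b : ℂ) :
    Kinvop q r (Finsupp.single n b) = (((q ^ (r - 2 * (n : ℝ)) : ℝ) : ℂ) * b) • Finsupp.single n 1 := by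
  simp [Kinvop, mul_comm]

lemma aux_Fop_single (n : ℕ) (b : ℂ) :
    Fop q r (Finsupp.single n b) = (((Fcoef q r n : ℝ) : ℂ) * b) • Finsupp.single (n - 1) 1 := by
  simp [Fop, mul_comm]

lemma aux_Fstarop_single (n : ℕ) (b : ℂ) :
    Fstarop q r (Finsupp.single n b) = (((Fcoef q r (n+1) : ℝ) : ℂ) * b) • Finsupp.single (n + 1) 1 := by
  simp [Fstarop, mul_comm]

lemma aux_innerF_zero_left (w : ℕ →₀ ℂ) : innerF 0 w = 0 := by simp [innerF]

lemma aux_innerF_zero_right (v : ℕ →₀ ℂ) : innerF v 0 = 0 := by simp [innerF]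

lemma aux_innerF_add_left (v v' w : ℕ →₀ ℂ) :
    innerF (v + v') w = innerF v w + innerF v' w := by
  unfold innerF
  apply Finsupp.sum_add_index
  · intro n _; simp
  · intro n _ a a'; rw [map_add]; ring

lemma aux_innerF_add_right (v w w' : ℕ →₀ ℂ) :
    innerF v (w + w') = innerF v w + innerF v w' := by
  unfold innerF
  rw [← Finsupp.sum_add]
  congr 1
  ext n a
  simp [mul_add]

lemma aux_innerF_single_left (m : ℕ) (a : ℂ) (w : ℕ →₀ ℂ) :
    innerF (Finsupp.single m a) w = (starRingEnd ℂ a) * w m := by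
  unfold innerF
  apply Finsupp.sum_single_index
  simp

theorem pi_r_is_star_representation (hq0 : 0 < q) (hq1 : q < 1) :
    (Kop q r ∘ₗ Fop q r = ((q : ℂ) ^ (-2 : ℤ)) • (Fop q r ∘ₗ Kop q r)) ∧
    (Kop q r ∘ₗ Fstarop q r = ((q : ℂ) ^ 2) • (Fstarop q r ∘ₗ Kop q r)) ∧
    (Fstarop q r ∘ₗ Fop q r - ((q : ℂ) ^ 2) • (Fop q r ∘ₗ Fstarop q r) =
      (((q - q⁻¹ : ℝ)⁻¹ : ℝ) : ℂ) • (LinearMap.id + Kinvop q r ∘ₗ Kinvop q r)) ∧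
    (Kop q r ∘ₗ Kinvop q r = LinearMap.id ∧ Kinvop q r ∘ₗ Kop q r = LinearMap.id) ∧
    (∀ v w : ℕ →₀ ℂ, innerF v (Fop q r w) = innerF (Fstarop q r v) w) ∧
    (∀ v w : ℕ →₀ ℂ, innerF v (Kop q r w) = innerF (Kop q r v) w) := by
  have hq : q ≠ 0 := hq0.ne'
  refine ⟨?_, ?_, ?_, ⟨?_, ?_⟩, ?_, ?_⟩
  · -- K F = q⁻² F K
    refine Finsupp.lhom_ext fun n b => ?_
    simp only [LinearMap.comp_apply, LinearMap.smul_apply, aux_Fop_single, aux_Kop_single,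
      map_smul, smul_smul]
    congr 1
    cases n with
    | zero => simp [aux_Fcoef_zero]
    | succ m =>
      simp only [Nat.add_sub_cancel]
      have hreal : q^2 * q^(-r + 2*((m:ℕ):ℝ)) = q^(-r+2*(((m+1:ℕ)):ℝ)) := by
        rw [← Real.rpow_natCast q 2, ← Real.rpow_add hq0]
        congr 1
        push_cast; ring
      have hc : (q:ℂ)^2 * ((q^(-r + 2*((m:ℕ):ℝ)) : ℝ) : ℂ)
          = ((q^(-r+2*(((m+1:ℕ)):ℝ)) : ℝ) : ℂ) := by
        exact_mod_cast congrArg Complex.ofReal hreal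
      have hq2 : ((q:ℂ)^2) ≠ 0 := pow_ne_zero 2 (Complex.ofReal_ne_zero.mpr hq)
      rw [zpow_neg, zpow_two, ← sq, inv_mul_eq_div, eq_div_iff hq2]
      linear_combination ((Fcoef q r (m+1) : ℝ) : ℂ) * b * hc
  · -- K F* = q² F* K
    refine Finsupp.lhom_ext fun n b => ?_
    simp only [LinearMap.comp_apply, LinearMap.smul_apply, aux_Fstarop_single, aux_Kop_single,
      map_smul, smul_smul]
    congr 1
    have hreal : q^(-r + 2*(((n+1:ℕ)):ℝ)) = q^2 * q^(-r+2*((n:ℕ):ℝ)) := by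
      push_cast
      rw [show -r+2*((n:ℝ)+1) = (-r+2*(n:ℝ)) + ((2:ℕ):ℝ) by ring,
        Real.rpow_add hq0, Real.rpow_natCast]
      ring
    have hc : ((q^(-r + 2*(((n+1:ℕ)):ℝ)) : ℝ) : ℂ)
        = (q:ℂ)^2 * ((q^(-r+2*((n:ℕ):ℝ)) : ℝ) : ℂ) := by
      exact_mod_cast congrArg Complex.ofReal hreal
    rw [hc]
    ring
  · -- F* F - q² F F* = (q - q⁻¹)⁻¹ (1 + K⁻²)
    refine Finsupp.lhom_ext fun n b => ?_
    simp only [LinearMap.sub_apply, LinearMap.comp_apply, LinearMap.smul_apply,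
      LinearMap.add_apply, LinearMap.id_apply, aux_Fop_single, aux_Fstarop_single,
      aux_Kinvop_single, map_smul, smul_smul, Finsupp.smul_single, smul_eq_mul, mul_one]
    cases n with
    | zero =>
      have hc : (((Fcoef q r (0:ℕ) : ℝ):ℂ) * (((Fcoef q r (0:ℕ) : ℝ):ℂ)))
            - (q:ℂ)^2 * (((Fcoef q r 1 : ℝ):ℂ) * ((Fcoef q r 1 : ℝ):ℂ))
          = (((q - q⁻¹:ℝ)⁻¹ : ℝ) : ℂ)
            * (1 + ((q^(r-2*((0:ℕ):ℝ)) : ℝ):ℂ) * ((q^(r-2*((0:ℕ):ℝ)) : ℝ):ℂ)) := by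
        exact_mod_cast congrArg Complex.ofReal (aux_rel3_scalar q r hq0 hq1 0)
      rw [aux_Fcoef_zero, Complex.ofReal_zero] at hc
      simp only [aux_Fcoef_zero, Complex.ofReal_zero, zero_mul, mul_zero,
        Finsupp.single_zero, zero_sub, Nat.add_sub_cancel, smul_add, Finsupp.smul_single,
        smul_eq_mul]
      rw [← Finsupp.single_neg, ← Finsupp.single_add]
      congr 1
      linear_combination b * hc
    | succ m =>
      have hc : (((Fcoef q r (m+1) : ℝ):ℂ) * (((Fcoef q r (m+1) : ℝ):ℂ)))
            - (q:ℂ)^2 * (((Fcoef q r (m+1+1) : ℝ):ℂ) * ((Fcoef q r (m+1+1) : ℝ):ℂ))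
          = (((q - q⁻¹:ℝ)⁻¹ : ℝ) : ℂ)
            * (1 + ((q^(r-2*(((m+1:ℕ)):ℝ)) : ℝ):ℂ) * ((q^(r-2*(((m+1:ℕ)):ℝ)) : ℝ):ℂ)) := by
        exact_mod_cast congrArg Complex.ofReal (aux_rel3_scalar q r hq0 hq1 (m+1))
      simp only [Nat.add_sub_cancel, smul_add, Finsupp.smul_single, smul_eq_mul]
      rw [← Finsupp.single_sub, ← Finsupp.single_add]
      congr 1
      linear_combination b * hc
  · -- K K⁻¹ = 1
    refine Finsupp.lhom_ext fun n b => ?_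
    simp only [LinearMap.comp_apply, LinearMap.id_apply, aux_Kop_single, aux_Kinvop_single,
      map_smul, smul_smul, Finsupp.smul_single, smul_eq_mul, mul_one]
    have hreal : q^(-r+2*(n:ℝ)) * q^(r-2*(n:ℝ)) = 1 := by
      rw [← Real.rpow_add hq0]; norm_num
    have hc : ((q^(-r+2*(n:ℝ)) : ℝ):ℂ) * ((q^(r-2*(n:ℝ)) : ℝ):ℂ) = 1 := by
      exact_mod_cast congrArg Complex.ofReal hreal
    congr 1
    linear_combination b * hc
  · -- K⁻¹ K = 1
    refine Finsupp.lhom_ext fun n b => ?_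
    simp only [LinearMap.comp_apply, LinearMap.id_apply, aux_Kop_single, aux_Kinvop_single,
      map_smul, smul_smul, Finsupp.smul_single, smul_eq_mul, mul_one]
    have hreal : q^(r-2*(n:ℝ)) * q^(-r+2*(n:ℝ)) = 1 := by
      rw [← Real.rpow_add hq0]; norm_num
    have hc : ((q^(r-2*(n:ℝ)) : ℝ):ℂ) * ((q^(-r+2*(n:ℝ)) : ℝ):ℂ) = 1 := by
      exact_mod_cast congrArg Complex.ofReal hreal
    congr 1
    linear_combination b * hc
  · -- ⟨v, F w⟩ = ⟨F* v, w⟩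
    intro v w
    induction v using Finsupp.induction_linear with
    | zero => simp [aux_innerF_zero_left, map_zero]
    | add v v' hv hv' => rw [map_add, aux_innerF_add_left, aux_innerF_add_left, hv, hv']
    | single m a =>
      induction w using Finsupp.induction_linear with
      | zero => simp [aux_innerF_zero_right, map_zero]
      | add w w' hw hw' => rw [map_add, aux_innerF_add_right, aux_innerF_add_right, hw, hw']
      | single n b =>
        rw [aux_Fop_single, aux_Fstarop_single]
        simp only [Finsupp.smul_single, smul_eq_mul, mul_one, aux_innerF_single_left,
          Finsupp.single_apply, map_mul, Complex.conj_ofReal]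
        cases n with
        | zero => simp [aux_Fcoef_zero]
        | succ k =>
          by_cases h : m = k
          · subst h; simp; ring
          · rw [if_neg (by omega), if_neg (by omega)]
            simp
  · -- ⟨v, K w⟩ = ⟨K v, w⟩
    intro v w
    induction v using Finsupp.induction_linear with
    | zero => simp [aux_innerF_zero_left, map_zero]
    | add v v' hv hv' => rw [map_add, aux_innerF_add_left, aux_innerF_add_left, hv, hv']
    | single m a =>
      induction w using Finsupp.induction_linear with
      | zero => simp [aux_innerF_zero_right, map_zero]
      | add w w' hw hw' => rw [map_add, aux_innerF_add_right, aux_innerF_add_right, hw, hw']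
      | single n b =>
        rw [aux_Kop_single, aux_Kop_single]
        simp only [Finsupp.smul_single, smul_eq_mul, mul_one, aux_innerF_single_left,
          Finsupp.single_apply, map_mul, Complex.conj_ofReal]
        by_cases h : n = m
        · subst h; simp; ring
        · rw [if_neg h, if_neg h]
          simp

end
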